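/- arXiv:2512.14988 — 5 statements merged into one kernel-verified Lean document; each statement's English description precedes it below -/
import Mathlib

section
/- Fix maps i : U → V, j : V → V', and p : E → B in a finitely complete category C, with U, V, V' exponentiable. The set of uniform left-restricted lifting structures (i.e., natural families assigning to each X and each pair (u : X × U → E, v' : X × V' → B) with p∘u = v'∘(X×j)∘(X×i) a diagonal filler F_X(u,v') : X × V → E satisfying F_X(u,v')∘(X×i) = u and p∘F_X(u,v') = v'∘(X×j), natural in X) is in bijection with the set of morphisms from [U,E] ×_{[U,B]} [V',B] to [V,E] in the slice category C/([U,E] ×_{[U,B]} [V,B]). -/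
open CategoryTheory CategoryTheory.Limits CategoryTheory.MonoidalCategory
open CategoryTheory.CartesianClosed
open CategoryTheory.MonoidalClosed

universe v u
noncomputable section

set_option linter.unusedSectionVars false

variable {C : Type u} [Category.{v} C] [Limits.HasFiniteLimits C] [CartesianMonoidalCategory C]

instance : BraidedCategory C := .ofCartesianMonoidalCategory

/-- A uniform family of lifts of `i : U ⟶ V` against `p : E ⟶ B`, left-restricted along
`j : V ⟶ V'`: for every `X` and every lifting problem
`(u : X ⊗ U ⟶ E, v' : X ⊗ V' ⟶ B)` with `u ≫ p = (X ◁ (i ≫ j)) ≫ v'`, a diagonal filler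
`X ⊗ V ⟶ E`, uniformly (naturally) in `X`. -/
structure UniformLiftLR {U V V' E B : C} (i : U ⟶ V) (j : V ⟶ V') (p : E ⟶ B) where
  F : ∀ (X : C) (u : X ⊗ U ⟶ E) (v' : X ⊗ V' ⟶ B),
      u ≫ p = (X ◁ (i ≫ j)) ≫ v' → (X ⊗ V ⟶ E)
  fac_left : ∀ X u v' h, (X ◁ i) ≫ F X u v' h = u
  fac_right : ∀ X u v' h, F X u v' h ≫ p = (X ◁ j) ≫ v'
  uniform : ∀ {Y X : C} (t : Y ⟶ X) u v' h h',
    F Y ((t ▷ U) ≫ u) ((t ▷ V') ≫ v') h' = (t ▷ V) ≫ F X u v' h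

section Aux
variable [MonoidalClosed C]

/-- Curry with the exponentiable object on the right of the tensor. -/
def cur {X A Y : C} (f : X ⊗ A ⟶ Y) : X ⟶ A ⟹ Y :=
  MonoidalClosed.curry ((β_ A X).hom ≫ f)

/-- Uncurry with the exponentiable object on the right of the tensor. -/
def unc {X A Y : C} (g : X ⟶ A ⟹ Y) : X ⊗ A ⟶ Y :=
  (β_ X A).hom ≫ MonoidalClosed.uncurry g

@[simp] lemma cur_unc {X A Y : C} (g : X ⟶ A ⟹ Y) : cur (unc g) = g := by
  simp [cur, unc, ← Category.assoc]

@[simp] lemma unc_cur {X A Y : C} (f : X ⊗ A ⟶ Y) : unc (cur f) = f := by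
  simp [cur, unc, ← Category.assoc]

lemma cur_whisker {Y X A Z : C} (t : Y ⟶ X) (f : X ⊗ A ⟶ Z) :
    cur ((t ▷ A) ≫ f) = t ≫ cur f := by
  rw [cur, cur, ← curry_natural_left]
  congr 1
  rw [← Category.assoc, ← Category.assoc, BraidedCategory.braiding_naturality_right]

lemma unc_comp_left {Y X A Z : C} (t : Y ⟶ X) (g : X ⟶ A ⟹ Z) :
    unc (t ≫ g) = (t ▷ A) ≫ unc g := by
  conv_lhs => rw [← cur_unc g, ← cur_whisker, unc_cur]

lemma cur_comp_right {X A Y Z : C} (f : X ⊗ A ⟶ Y) (g : Y ⟶ Z) :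
    cur f ≫ (ihom A).map g = cur (f ≫ g) := by
  rw [cur, cur, ← curry_natural_right, Category.assoc]

lemma unc_comp_right {X A Y Z : C} (g : X ⟶ A ⟹ Y) (q : Y ⟶ Z) :
    unc (g ≫ (ihom A).map q) = unc g ≫ q := by
  conv_lhs => rw [← cur_unc g, cur_comp_right, unc_cur]

lemma cur_pre {X A B' Y : C} (f : B' ⟶ A) (g : X ⊗ A ⟶ Y) :
    cur g ≫ (pre f).app Y = cur ((X ◁ f) ≫ g) := by
  apply uncurry_injective
  rw [uncurry_natural_left, uncurry_pre, cur, cur, uncurry_curry, whisker_exchange_assoc,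
    ← uncurry_eq, uncurry_curry, BraidedCategory.braiding_naturality_left_assoc]

lemma unc_pre {X A B' Y : C} (f : B' ⟶ A) (g : X ⟶ A ⟹ Y) :
    unc (g ≫ (pre f).app Y) = (X ◁ f) ≫ unc g := by
  conv_lhs => rw [← cur_unc g, cur_pre, unc_cur]

end Aux

section Main
variable [MonoidalClosed C] {U V V' E B : C} (i : U ⟶ V) (j : V ⟶ V') (p : E ⟶ B)

lemma UniformLiftLR.ext' {S T : UniformLiftLR i j p} (h : S.F = T.F) : S = T := by
  cases S; cases T; cases h; rfl

lemma UniformLiftLR.F_congr (S : UniformLiftLR i j p) {X : C} {u u' : X ⊗ U ⟶ E}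
    {v v' : X ⊗ V' ⟶ B} (hu : u = u') (hv : v = v') (h h') :
    S.F X u v h = S.F X u' v' h' := by subst hu; subst hv; rfl

/-- The generic lifting problem: first component. -/
def genU : pullback ((ihom U).map p) ((pre (i ≫ j)).app B) ⊗ U ⟶ E :=
  unc (pullback.fst ((ihom U).map p) ((pre (i ≫ j)).app B))

/-- The generic lifting problem: second component. -/
def genV' : pullback ((ihom U).map p) ((pre (i ≫ j)).app B) ⊗ V' ⟶ B :=
  unc (pullback.snd ((ihom U).map p) ((pre (i ≫ j)).app B))

lemma genh : genU i j p ≫ p = (_ ◁ (i ≫ j)) ≫ genV' i j p := by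
  rw [genU, genV', ← unc_comp_right, ← unc_pre, pullback.condition]

/-- The classifying map of a lifting problem. -/
def liftProb {X : C} (u : X ⊗ U ⟶ E) (v' : X ⊗ V' ⟶ B) (h : u ≫ p = (X ◁ (i ≫ j)) ≫ v') :
    X ⟶ pullback ((ihom U).map p) ((pre (i ≫ j)).app B) :=
  pullback.lift (cur u) (cur v') (by rw [cur_comp_right, cur_pre, h])

@[simp] lemma liftProb_fst {X : C} (u : X ⊗ U ⟶ E) (v' : X ⊗ V' ⟶ B) (h) :
    liftProb i j p u v' h ≫ pullback.fst _ _ = cur u := pullback.lift_fst _ _ _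

@[simp] lemma liftProb_snd {X : C} (u : X ⊗ U ⟶ E) (v' : X ⊗ V' ⟶ B) (h) :
    liftProb i j p u v' h ≫ pullback.snd _ _ = cur v' := pullback.lift_snd _ _ _

lemma liftProb_gen : liftProb i j p (genU i j p) (genV' i j p) (genh i j p) = 𝟙 _ := by
  apply pullback.hom_ext <;> simp [genU, genV']

lemma liftProb_comp {Y X : C} (t : Y ⟶ X) (u : X ⊗ U ⟶ E) (v' : X ⊗ V' ⟶ B) (h h') :
    liftProb i j p ((t ▷ U) ≫ u) ((t ▷ V') ≫ v') h' = t ≫ liftProb i j p u v' h := by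
  apply pullback.hom_ext <;> simp [cur_whisker]

/-- The lifting structure associated to a map out of the pullback. -/
def back (l : pullback ((ihom U).map p) ((pre (i ≫ j)).app B) ⟶ V ⟹ E)
    (wf : l ≫ (pre i).app E = pullback.fst _ _)
    (ws : l ≫ (ihom V).map p = pullback.snd _ _ ≫ (pre j).app B) : UniformLiftLR i j p where
  F X u v' h := unc (liftProb i j p u v' h ≫ l)
  fac_left X u v' h := by
    rw [← unc_pre, Category.assoc, wf, liftProb_fst, unc_cur]
  fac_right X u v' h := by
    rw [← unc_comp_right, Category.assoc, ws, ← Category.assoc, liftProb_snd, unc_pre, unc_cur]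
  uniform {Y X} t u v' h h' := by
    rw [liftProb_comp i j p t u v' h h', Category.assoc, unc_comp_left]

end Main

/-- the set of uniform left-restricted lifting structures of `i` against `p`
restricted along `j` is in bijection with the set of morphisms
`[U,E] ×_{[U,B]} [V',B] ⟶ [V,E]` in the slice category over `[U,E] ×_{[U,B]} [V,B]`. -/
theorem stmt1 [MonoidalClosed C] {U V V' E B : C} (i : U ⟶ V) (j : V ⟶ V') (p : E ⟶ B) :
    Nonempty (UniformLiftLR i j p ≃
      (Over.mk (pullback.map ((ihom U).map p) ((pre (i ≫ j)).app B)
          ((ihom U).map p) ((pre i).app B) (𝟙 _) ((pre j).app B) (𝟙 _)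
          (by simp) (by simp [pre_map])) ⟶
       Over.mk (pullback.lift ((pre i).app E) ((ihom V).map p)
          ((pre i).naturality p).symm))) := by
  constructor
  refine
    { toFun := fun S => Over.homMk (cur (S.F _ (genU i j p) (genV' i j p) (genh i j p))) ?_
      invFun := fun φ => back i j p φ.left ?_ ?_
      left_inv := ?_
      right_inv := ?_ }
  · apply pullback.hom_ext
    · simp only [Over.mk_hom, Category.assoc, pullback.lift_fst, Category.comp_id]
      rw [cur_pre, S.fac_left, genU, cur_unc]
    · simp only [Over.mk_hom, Category.assoc, pullback.lift_snd]
      rw [cur_comp_right, S.fac_right, ← cur_pre, genV', cur_unc]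
  · have h1 := (Over.w φ) =≫ pullback.fst ((ihom U).map p) ((pre i).app B)
    simp only [Over.mk_hom, Category.assoc] at h1
    erw [pullback.lift_fst, pullback.lift_fst] at h1
    simpa using h1
  · have h2 := (Over.w φ) =≫ pullback.snd ((ihom U).map p) ((pre i).app B)
    simp only [Over.mk_hom, Category.assoc] at h2
    erw [pullback.lift_snd, pullback.lift_snd] at h2
    exact h2
  · intro S
    apply UniformLiftLR.ext'
    funext X u v' h
    show unc (liftProb i j p u v' h ≫ cur (S.F _ _ _ _)) = S.F X u v' h
    rw [← cur_whisker, unc_cur]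
    refine ((S.uniform (liftProb i j p u v' h) _ _ (genh i j p) ?_).symm).trans
      (S.F_congr i j p ?_ ?_ _ _)
    · rw [Category.assoc, genh i j p, ← Category.assoc, ← whisker_exchange, Category.assoc]
    · rw [genU, ← unc_comp_left, liftProb_fst, unc_cur]
    · rw [genV', ← unc_comp_left, liftProb_snd, unc_cur]
  · intro φ
    apply Over.OverMorphism.ext
    show cur (unc (liftProb i j p (genU i j p) (genV' i j p) (genh i j p) ≫ φ.left)) = φ.left
    rw [liftProb_gen, Category.id_comp, cur_unc]
end
end

section
/- Fix maps i : U → V and p : E → B and q : B' → B in a finitely complete category C, with U, V exponentiable. The set of uniform right-restricted lifting structures of i against p restricted along q is in bijection with the set of morphisms from [U,E] ×_{[U,B]} [V,B'] to [V,E] in the slice category C/([U,E] ×_{[U,B]} [V,B]). -/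
open CategoryTheory CategoryTheory.Limits CategoryTheory.MonoidalCategory
open CategoryTheory.CartesianClosed
open CategoryTheory.MonoidalClosed

universe v u
noncomputable section

variable {C : Type u} [Category.{v} C] [Limits.HasFiniteLimits C] [CartesianMonoidalCategory C]

attribute [local instance] BraidedCategory.ofCartesianMonoidalCategory

/-- A uniform family of lifts of `i : U ⟶ V` against `p : E ⟶ B`, right-restricted along
`q : B' ⟶ B`: for every `X` and every lifting problem
`(u : X ⊗ U ⟶ E, v : X ⊗ V ⟶ B')` with `u ≫ p = (X ◁ i) ≫ v ≫ q`, a diagonal filler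
`X ⊗ V ⟶ E`, uniformly (naturally) in `X`. -/
structure UniformLiftRR {U V E B B' : C} (i : U ⟶ V) (p : E ⟶ B) (q : B' ⟶ B) where
  F : ∀ (X : C) (u : X ⊗ U ⟶ E) (v : X ⊗ V ⟶ B'),
      u ≫ p = (X ◁ i) ≫ v ≫ q → (X ⊗ V ⟶ E)
  fac_left : ∀ X u v h, (X ◁ i) ≫ F X u v h = u
  fac_right : ∀ X u v h, F X u v h ≫ p = v ≫ q
  uniform : ∀ {Y X : C} (t : Y ⟶ X) u v h h',
    F Y ((t ▷ U) ≫ u) ((t ▷ V) ≫ v) h' = (t ▷ V) ≫ F X u v h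

namespace Stmt2Aux

variable [MonoidalClosed C] {U V E B B' : C} (i : U ⟶ V) (p : E ⟶ B) (q : B' ⟶ B)

theorem uncurry_comp_pre {X Y : C} (k : Y ⟶ V ⟹ X) :
    MonoidalClosed.uncurry (k ≫ (MonoidalClosed.pre i).app X) = (i ▷ Y) ≫ MonoidalClosed.uncurry k := by
  rw [uncurry_eq, uncurry_eq, MonoidalCategory.whiskerLeft_comp, Category.assoc,
    id_tensor_pre_app_comp_ev, ← whisker_exchange_assoc]

theorem curry_comp_pre {X Y : C} (f : V ⊗ Y ⟶ X) :
    MonoidalClosed.curry f ≫ (MonoidalClosed.pre i).app X = MonoidalClosed.curry ((i ▷ Y) ≫ f) := by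
  apply MonoidalClosed.uncurry_injective
  rw [uncurry_comp_pre, uncurry_curry, uncurry_curry]

/-- The object `[U,E] ×_{[U,B]} [V,B']`. -/
abbrev P : C := pullback ((ihom U).map p) ((ihom V).map q ≫ (MonoidalClosed.pre i).app B)

/-- First projection. -/
abbrev π₁ : P i p q ⟶ U ⟹ E := pullback.fst _ _

/-- Second projection. -/
abbrev π₂ : P i p q ⟶ V ⟹ B' := pullback.snd _ _

/-- The universal lifting problem, left part. -/
def u₀ : P i p q ⊗ U ⟶ E := (β_ _ _).hom ≫ MonoidalClosed.uncurry (π₁ i p q)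

/-- The universal lifting problem, right part. -/
def v₀ : P i p q ⊗ V ⟶ B' := (β_ _ _).hom ≫ MonoidalClosed.uncurry (π₂ i p q)

theorem h₀ : u₀ i p q ≫ p = (P i p q ◁ i) ≫ v₀ i p q ≫ q := by
  have h1 : MonoidalClosed.uncurry (π₁ i p q) ≫ p
      = (i ▷ P i p q) ≫ MonoidalClosed.uncurry (π₂ i p q) ≫ q := by
    rw [← uncurry_natural_right, pullback.condition, ← Category.assoc, uncurry_comp_pre,
      uncurry_natural_right]
  rw [u₀, v₀, Category.assoc, h1, ← BraidedCategory.braiding_naturality_right_assoc]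
  simp only [Category.assoc]

/-- The classifying map of a lifting problem. -/
def ℓ {X : C} (u : X ⊗ U ⟶ E) (v : X ⊗ V ⟶ B') (h : u ≫ p = (X ◁ i) ≫ v ≫ q) :
    X ⟶ P i p q :=
  pullback.lift (MonoidalClosed.curry ((β_ U X).hom ≫ u))
    (MonoidalClosed.curry ((β_ V X).hom ≫ v)) (by
      rw [← curry_natural_right, ← Category.assoc, ← curry_natural_right, curry_comp_pre]
      congr 1
      simp only [Category.assoc, BraidedCategory.braiding_naturality_left_assoc, h])

@[simp]
theorem ℓ_fst {X : C} (u : X ⊗ U ⟶ E) (v : X ⊗ V ⟶ B') (h) :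
    ℓ i p q u v h ≫ π₁ i p q = MonoidalClosed.curry ((β_ U X).hom ≫ u) :=
  pullback.lift_fst _ _ _

@[simp]
theorem ℓ_snd {X : C} (u : X ⊗ U ⟶ E) (v : X ⊗ V ⟶ B') (h) :
    ℓ i p q u v h ≫ π₂ i p q = MonoidalClosed.curry ((β_ V X).hom ≫ v) :=
  pullback.lift_snd _ _ _

theorem ℓ_whisker_u₀ {X : C} (u : X ⊗ U ⟶ E) (v : X ⊗ V ⟶ B') (h) :
    (ℓ i p q u v h ▷ U) ≫ u₀ i p q = u := by
  rw [u₀, BraidedCategory.braiding_naturality_left_assoc, ← uncurry_natural_left, ℓ_fst,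
    uncurry_curry, SymmetricCategory.symmetry_assoc]

theorem ℓ_whisker_v₀ {X : C} (u : X ⊗ U ⟶ E) (v : X ⊗ V ⟶ B') (h) :
    (ℓ i p q u v h ▷ V) ≫ v₀ i p q = v := by
  rw [v₀, BraidedCategory.braiding_naturality_left_assoc, ← uncurry_natural_left, ℓ_snd,
    uncurry_curry, SymmetricCategory.symmetry_assoc]

theorem ℓ_naturality {Y X : C} (t : Y ⟶ X) (u : X ⊗ U ⟶ E) (v : X ⊗ V ⟶ B') (h) (h') :
    ℓ i p q ((t ▷ U) ≫ u) ((t ▷ V) ≫ v) h' = t ≫ ℓ i p q u v h := by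
  apply pullback.hom_ext
  · rw [Category.assoc, ℓ_fst, ℓ_fst, ← curry_natural_left]
    congr 1
    rw [BraidedCategory.braiding_naturality_right_assoc]
  · rw [Category.assoc, ℓ_snd, ℓ_snd, ← curry_natural_left]
    congr 1
    rw [BraidedCategory.braiding_naturality_right_assoc]

theorem UniformLiftRR.ext' {L L' : UniformLiftRR i p q} (h : L.F = L'.F) : L = L' := by
  cases L; cases L'; cases h; rfl

theorem F_congr (L : UniformLiftRR i p q) {X : C} {u u' : X ⊗ U ⟶ E} {v v' : X ⊗ V ⟶ B'}
    (hu : u = u') (hv : v = v') (h) (h') : L.F X u v h = L.F X u' v' h' := by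
  cases hu; cases hv; rfl

/-- Forward direction: from a uniform lifting structure to a morphism in the slice. -/
def toHom (L : UniformLiftRR i p q) :
    Over.mk (pullback.map ((ihom U).map p) ((ihom V).map q ≫ (MonoidalClosed.pre i).app B)
        ((ihom U).map p) ((MonoidalClosed.pre i).app B) (𝟙 _) ((ihom V).map q) (𝟙 _)
        (by simp) (by simp)) ⟶
      Over.mk (pullback.lift ((MonoidalClosed.pre i).app E) ((ihom V).map p)
        ((MonoidalClosed.pre i).naturality p).symm) :=
  Over.homMk
    (MonoidalClosed.curry ((β_ V (P i p q)).hom ≫ L.F _ (u₀ i p q) (v₀ i p q) (h₀ i p q)))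
    (by
      dsimp only [Over.mk_hom, Over.mk_left]
      apply pullback.hom_ext
      · simp only [Category.assoc, pullback.lift_fst, Category.comp_id]
        rw [curry_comp_pre, BraidedCategory.braiding_naturality_left_assoc, L.fac_left, u₀,
          SymmetricCategory.symmetry_assoc, curry_uncurry]
      · simp only [Category.assoc, pullback.lift_snd]
        rw [← curry_natural_right]
        simp only [Category.assoc]
        rw [L.fac_right, v₀]
        simp only [Category.assoc, SymmetricCategory.symmetry_assoc]
        rw [← uncurry_natural_right, curry_uncurry])

@[simp]
theorem toHom_left (L : UniformLiftRR i p q) :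
    (toHom i p q L).left =
      MonoidalClosed.curry
        ((β_ V (P i p q)).hom ≫ L.F _ (u₀ i p q) (v₀ i p q) (h₀ i p q)) :=
  rfl

theorem hom_pre
    (k : Over.mk (pullback.map ((ihom U).map p) ((ihom V).map q ≫ (MonoidalClosed.pre i).app B)
        ((ihom U).map p) ((MonoidalClosed.pre i).app B) (𝟙 _) ((ihom V).map q) (𝟙 _)
        (by simp) (by simp)) ⟶
      Over.mk (pullback.lift ((MonoidalClosed.pre i).app E) ((ihom V).map p)
        ((MonoidalClosed.pre i).naturality p).symm)) :
    k.left ≫ (MonoidalClosed.pre i).app E = π₁ i p q := by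
  have h := Over.w k =≫ pullback.fst ((ihom U).map p) ((MonoidalClosed.pre i).app B)
  simp only [Over.mk_hom, Category.assoc] at h
  rw [pullback.lift_fst] at h
  erw [pullback.lift_fst] at h
  exact h.trans (Category.comp_id _)

theorem hom_exp
    (k : Over.mk (pullback.map ((ihom U).map p) ((ihom V).map q ≫ (MonoidalClosed.pre i).app B)
        ((ihom U).map p) ((MonoidalClosed.pre i).app B) (𝟙 _) ((ihom V).map q) (𝟙 _)
        (by simp) (by simp)) ⟶
      Over.mk (pullback.lift ((MonoidalClosed.pre i).app E) ((ihom V).map p)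
        ((MonoidalClosed.pre i).naturality p).symm)) :
    k.left ≫ (ihom V).map p = π₂ i p q ≫ (ihom V).map q := by
  have h := Over.w k =≫ pullback.snd ((ihom U).map p) ((MonoidalClosed.pre i).app B)
  simp only [Over.mk_hom, Category.assoc] at h
  rw [pullback.lift_snd] at h
  erw [pullback.lift_snd] at h
  exact h

/-- Backward direction: from a morphism in the slice to a uniform lifting structure. -/
def invLift
    (k : Over.mk (pullback.map ((ihom U).map p) ((ihom V).map q ≫ (MonoidalClosed.pre i).app B)
        ((ihom U).map p) ((MonoidalClosed.pre i).app B) (𝟙 _) ((ihom V).map q) (𝟙 _)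
        (by simp) (by simp)) ⟶
      Over.mk (pullback.lift ((MonoidalClosed.pre i).app E) ((ihom V).map p)
        ((MonoidalClosed.pre i).naturality p).symm)) : UniformLiftRR i p q where
  F X u v h := (β_ X V).hom ≫ MonoidalClosed.uncurry (ℓ i p q u v h ≫ k.left)
  fac_left X u v h := by
    rw [BraidedCategory.braiding_naturality_right_assoc, ← uncurry_comp_pre,
      Category.assoc, hom_pre, ℓ_fst, uncurry_curry, SymmetricCategory.symmetry_assoc]
  fac_right X u v h := by
    rw [Category.assoc, ← uncurry_natural_right, Category.assoc, hom_exp,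
      ← Category.assoc (ℓ i p q u v h), uncurry_natural_right, ℓ_snd, uncurry_curry]
    simp only [Category.assoc, SymmetricCategory.symmetry_assoc]
  uniform {Y X} t u v h h' := by
    rw [ℓ_naturality i p q t u v h h', Category.assoc, uncurry_natural_left,
      ← BraidedCategory.braiding_naturality_left_assoc]

end Stmt2Aux

open Stmt2Aux

/-- the set of uniform right-restricted lifting structures of `i` against `p`
restricted along `q` is in bijection with the set of morphisms
`[U,E] ×_{[U,B]} [V,B'] ⟶ [V,E]` in the slice category over `[U,E] ×_{[U,B]} [V,B]`. -/
theorem stmt2 [MonoidalClosed C] {U V E B B' : C} (i : U ⟶ V) (p : E ⟶ B) (q : B' ⟶ B) :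
    Nonempty (UniformLiftRR i p q ≃
      (Over.mk (pullback.map ((ihom U).map p) ((ihom V).map q ≫ (MonoidalClosed.pre i).app B)
          ((ihom U).map p) ((MonoidalClosed.pre i).app B) (𝟙 _) ((ihom V).map q) (𝟙 _)
          (by simp) (by simp)) ⟶
       Over.mk (pullback.lift ((MonoidalClosed.pre i).app E) ((ihom V).map p)
          ((MonoidalClosed.pre i).naturality p).symm))) := by
  refine ⟨⟨toHom i p q, invLift i p q, ?_, ?_⟩⟩
  · -- left inverse
    intro L
    apply UniformLiftRR.ext'
    funext X u v h
    show (β_ X V).hom ≫ MonoidalClosed.uncurry (ℓ i p q u v h ≫ (toHom i p q L).left)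
      = L.F X u v h
    rw [toHom_left, uncurry_natural_left, uncurry_curry,
      BraidedCategory.braiding_naturality_right_assoc, SymmetricCategory.symmetry_assoc,
      ← L.uniform (ℓ i p q u v h) (u₀ i p q) (v₀ i p q) (h₀ i p q)
        (by rw [ℓ_whisker_u₀, ℓ_whisker_v₀]; exact h)]
    exact F_congr i p q L (ℓ_whisker_u₀ i p q u v h) (ℓ_whisker_v₀ i p q u v h) _ _
  · -- right inverse
    intro k
    have hℓ : ℓ i p q (u₀ i p q) (v₀ i p q) (h₀ i p q) = 𝟙 _ := by
      apply pullback.hom_ext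
      · rw [Category.id_comp, ℓ_fst, u₀, SymmetricCategory.symmetry_assoc, curry_uncurry]
      · rw [Category.id_comp, ℓ_snd, v₀, SymmetricCategory.symmetry_assoc, curry_uncurry]
    apply Over.OverMorphism.ext
    show MonoidalClosed.curry ((β_ V (P i p q)).hom ≫ (β_ (P i p q) V).hom ≫
        MonoidalClosed.uncurry (ℓ i p q (u₀ i p q) (v₀ i p q) (h₀ i p q) ≫ k.left))
      = k.left
    rw [hℓ, Category.id_comp, SymmetricCategory.symmetry_assoc, curry_uncurry]
end
end

section
/- Let C be a locally cartesian closed model category in which the pullback-power (pullback-hom) of every (trivial cofibration, fibration) pair and every (cofibration, trivial fibration) pair admits a section. Then for every map i : U → V and p : E → B such that (i,p) is either a (trivial cofibration, fibration) pair or a (cofibration, trivial fibration) pair, there exists a uniform lifting structure of i against p, i.e., a natural-in-X choice of diagonal fillers for all lifting problems of X × i against p. -/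
open CategoryTheory CategoryTheory.Limits CategoryTheory.MonoidalCategory
open CategoryTheory.CartesianClosed

universe v u
noncomputable section

variable {C : Type u} [Category.{v} C] [Limits.HasFiniteLimits C] [CartesianMonoidalCategory C]

/-- `CartesianClosed`, `exp` and `pre` as in the older Mathlib (removed since). -/
abbrev CartesianClosed (D : Type*) [Category D] [CartesianMonoidalCategory D] := MonoidalClosed D

abbrev exp (A : C) [Closed A] : C ⥤ C := ihom A

abbrev pre {A B : C} (f : B ⟶ A) [Closed A] [Closed B] : exp A ⟶ exp B := MonoidalClosed.pre f

/-- A uniform lifting structure of `i : U ⟶ V` against `p : E ⟶ B`: a natural-in-`X`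
choice of diagonal fillers for all lifting problems of `X × i` against `p`. -/
structure UniformLift {U V E B : C} (i : U ⟶ V) (p : E ⟶ B) where
  F : ∀ (X : C) (u : X ⊗ U ⟶ E) (v : X ⊗ V ⟶ B),
      u ≫ p = (X ◁ i) ≫ v → (X ⊗ V ⟶ E)
  fac_left : ∀ X u v h, (X ◁ i) ≫ F X u v h = u
  fac_right : ∀ X u v h, F X u v h ≫ p = v
  uniform : ∀ {Y X : C} (t : Y ⟶ X) u v h h',
    F Y ((t ▷ U) ≫ u) ((t ▷ V) ≫ v) h' = (t ▷ V) ≫ F X u v h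

/-- The pullback-power (pullback-hom) of `i : U ⟶ V` against `p : E ⟶ B`:
the canonical map `[V,E] ⟶ [U,E] ×_{[U,B]} [V,B]`. -/
def pbPower [CartesianClosed C] {U V E B : C} (i : U ⟶ V) (p : E ⟶ B) :
    (V ⟹ E) ⟶ pullback ((exp U).map p) ((pre i).app B) :=
  pullback.lift ((pre i).app E) ((exp V).map p) ((pre i).naturality p).symm

theorem uncurry_comp_pre [CartesianClosed C] {A B' Y E : C} (f : B' ⟶ A) (g : Y ⟶ A ⟹ E) :
    MonoidalClosed.uncurry (g ≫ (pre f).app E) = (f ▷ Y) ≫ MonoidalClosed.uncurry g := by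
  rw [MonoidalClosed.uncurry_eq, MonoidalClosed.uncurry_eq, MonoidalCategory.whiskerLeft_comp, Category.assoc,
    MonoidalClosed.id_tensor_pre_app_comp_ev, ← whisker_exchange_assoc]

theorem curry_pre_aux [CartesianClosed C] {A B' X E : C} (f : B' ⟶ A) (w : A ⊗ X ⟶ E) :
    MonoidalClosed.curry w ≫ (pre f).app E = MonoidalClosed.curry ((f ▷ X) ≫ w) := by
  apply MonoidalClosed.uncurry_injective
  rw [uncurry_comp_pre, MonoidalClosed.uncurry_curry, MonoidalClosed.uncurry_curry]

attribute [local instance] BraidedCategory.ofCartesianMonoidalCategory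

/-- in a locally cartesian closed model category where the pullback-power of
every (trivial cofibration, fibration)- and every (cofibration, trivial fibration)-pair
admits a section, every such pair `(i, p)` admits a uniform lifting structure. -/
theorem stmt3 [CartesianClosed C]
    [∀ X : C, CartesianMonoidalCategory (Over X)] [∀ X : C, CartesianClosed (Over X)]
    (cof fib weq : MorphismProperty C)
    (hsec : ∀ {U V E B : C} (i : U ⟶ V) (p : E ⟶ B),
      ((cof i ∧ weq i ∧ fib p) ∨ (cof i ∧ fib p ∧ weq p)) →
      ∃ s : pullback ((exp U).map p) ((pre i).app B) ⟶ (V ⟹ E),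
        s ≫ pbPower i p = 𝟙 _)
    {U V E B : C} (i : U ⟶ V) (p : E ⟶ B)
    (h : (cof i ∧ weq i ∧ fib p) ∨ (cof i ∧ fib p ∧ weq p)) :
    Nonempty (UniformLift i p) := by
  obtain ⟨s, hs⟩ := hsec i p h
  have hs1 : s ≫ (pre i).app E = pullback.fst _ _ := by
    have := hs =≫ pullback.fst ((exp U).map p) ((pre i).app B)
    rw [pbPower, Category.assoc, pullback.lift_fst] at this
    simpa using this
  have hs2 : s ≫ (exp V).map p = pullback.snd _ _ := by
    have := hs =≫ pullback.snd ((exp U).map p) ((pre i).app B)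
    unfold pbPower at this
    erw [Category.assoc, pullback.lift_snd] at this
    simpa using this
  -- the lift into the pullback associated to a lifting problem
  have key : ∀ (X : C) (u : X ⊗ U ⟶ E) (v : X ⊗ V ⟶ B), u ≫ p = (X ◁ i) ≫ v →
      MonoidalClosed.curry ((β_ U X).hom ≫ u) ≫ (exp U).map p =
      MonoidalClosed.curry ((β_ V X).hom ≫ v) ≫ (pre i).app B := by
    intro X u v h
    rw [← MonoidalClosed.curry_natural_right, curry_pre_aux]
    congr 1
    rw [Category.assoc, h, BraidedCategory.braiding_naturality_left_assoc]
  refine ⟨⟨fun X u v h =>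
      (β_ X V).hom ≫ MonoidalClosed.uncurry
        (pullback.lift (MonoidalClosed.curry ((β_ U X).hom ≫ u))
          (MonoidalClosed.curry ((β_ V X).hom ≫ v)) (key X u v h) ≫ s), ?_, ?_, ?_⟩⟩
  · intro X u v h
    have : (pullback.lift (MonoidalClosed.curry ((β_ U X).hom ≫ u))
          (MonoidalClosed.curry ((β_ V X).hom ≫ v)) (key X u v h) ≫ s) ≫ (pre i).app E =
        MonoidalClosed.curry ((β_ U X).hom ≫ u) := by
      rw [Category.assoc, hs1, pullback.lift_fst]
    have h2 := congrArg MonoidalClosed.uncurry this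
    rw [uncurry_comp_pre, MonoidalClosed.uncurry_curry] at h2
    rw [BraidedCategory.braiding_naturality_right_assoc, h2]
    simp
  · intro X u v h
    rw [Category.assoc, ← MonoidalClosed.uncurry_natural_right, Category.assoc, hs2, pullback.lift_snd,
      MonoidalClosed.uncurry_curry]
    simp
  · intro Y X t u v h h'
    have hlift : pullback.lift (MonoidalClosed.curry ((β_ U Y).hom ≫ (t ▷ U) ≫ u))
          (MonoidalClosed.curry ((β_ V Y).hom ≫ (t ▷ V) ≫ v)) (key Y _ _ h') =
        t ≫ pullback.lift (MonoidalClosed.curry ((β_ U X).hom ≫ u))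
          (MonoidalClosed.curry ((β_ V X).hom ≫ v)) (key X u v h) := by
      apply pullback.hom_ext
      · erw [pullback.lift_fst, Category.assoc, pullback.lift_fst]
        simp [← MonoidalClosed.curry_natural_left, ← BraidedCategory.braiding_naturality_left_assoc]
      · erw [pullback.lift_snd, Category.assoc, pullback.lift_snd]
        simp [← MonoidalClosed.curry_natural_left, ← BraidedCategory.braiding_naturality_left_assoc]
    have h3 := congrArg (fun ℓ => (β_ Y V).hom ≫ MonoidalClosed.uncurry (ℓ ≫ s)) hlift
    beta_reduce at h3
    refine h3.trans ?_
    rw [Category.assoc, MonoidalClosed.uncurry_natural_left, ← BraidedCategory.braiding_naturality_left_assoc]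
end
end

section
/- Let C be a cartesian closed finitely complete category with exponentiable objects ∂L, L, L' and maps ∂L → L → L' and E → Ē. Then the square with top map [L,E] ×_{[L,Ē]} [L',Ē] → [L,E] (projection), left map [L,E] ×_{[L,Ē]} [L',Ē] → [∂L,E] ×_{[∂L,Ē]} [L',Ē] (induced by restriction along ∂L → L on the first factor), right map [L,E] → [∂L,E] ×_{[∂L,Ē]} [L,Ē] (the pullback-hom), and bottom map [∂L,E] ×_{[∂L,Ē]} [L',Ē] → [∂L,E] ×_{[∂L,Ē]} [L,Ē] (induced by [L',Ē] → [L,Ē]), is a pullback square. -/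
open CategoryTheory CategoryTheory.Limits CategoryTheory.MonoidalCategory
open CategoryTheory.CartesianClosed

universe v u
noncomputable section

variable {C : Type u} [Category.{v} C] [Limits.HasFiniteLimits C] [CartesianMonoidalCategory C]

/-- for `∂L → L → L'` and `E → Ē`, the square
`[L,E] ×_{[L,Ē]} [L',Ē] → [L,E] → [∂L,E] ×_{[∂L,Ē]} [L,Ē]` (top-right) and
`[L,E] ×_{[L,Ē]} [L',Ē] → [∂L,E] ×_{[∂L,Ē]} [L',Ē] → [∂L,E] ×_{[∂L,Ē]} [L,Ē]`
(left-bottom) is a pullback square. -/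
theorem stmt12 [MonoidalClosed C] {dL L L' E Ebar : C}
    (l : dL ⟶ L) (l' : L ⟶ L') (e : E ⟶ Ebar) :
    IsPullback
      -- top: projection [L,E] ×_{[L,Ē]} [L',Ē] ⟶ [L,E]
      (pullback.fst ((ihom L).map e) ((MonoidalClosed.pre l').app Ebar))
      -- left: restriction along ∂L → L on the first factor
      (pullback.map ((ihom L).map e) ((MonoidalClosed.pre l').app Ebar)
        ((ihom dL).map e) ((MonoidalClosed.pre (l ≫ l')).app Ebar)
        ((MonoidalClosed.pre l).app E) (𝟙 _) ((MonoidalClosed.pre l).app Ebar)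
        ((MonoidalClosed.pre l).naturality e) (by simp [MonoidalClosed.pre_map]))
      -- right: the pullback-hom [L,E] ⟶ [∂L,E] ×_{[∂L,Ē]} [L,Ē]
      (pullback.lift ((MonoidalClosed.pre l).app E) ((ihom L).map e) ((MonoidalClosed.pre l).naturality e).symm)
      -- bottom: induced by [L',Ē] ⟶ [L,Ē]
      (pullback.map ((ihom dL).map e) ((MonoidalClosed.pre (l ≫ l')).app Ebar)
        ((ihom dL).map e) ((MonoidalClosed.pre l).app Ebar)
        (𝟙 _) ((MonoidalClosed.pre l').app Ebar) (𝟙 _) (by simp) (by simp [MonoidalClosed.pre_map])) := by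
  generalize_proofs
  have hpre : (MonoidalClosed.pre (l ≫ l')).app Ebar = (MonoidalClosed.pre l').app Ebar ≫ (MonoidalClosed.pre l).app Ebar := by
    rw [MonoidalClosed.pre_map]; rfl
  -- bottom auxiliary square is a pullback
  have bot : IsPullback
      (pullback.map ((ihom dL).map e) ((MonoidalClosed.pre (l ≫ l')).app Ebar)
        ((ihom dL).map e) ((MonoidalClosed.pre l).app Ebar)
        (𝟙 _) ((MonoidalClosed.pre l').app Ebar) (𝟙 _) (by assumption) (by assumption))
      (pullback.snd ((ihom dL).map e) ((MonoidalClosed.pre (l ≫ l')).app Ebar))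
      (pullback.snd ((ihom dL).map e) ((MonoidalClosed.pre l).app Ebar))
      ((MonoidalClosed.pre l').app Ebar) := by
    apply IsPullback.of_right _ (by exact pullback.lift_snd _ _ _)
      (IsPullback.of_hasPullback ((ihom dL).map e) ((MonoidalClosed.pre l).app Ebar))
    convert IsPullback.of_hasPullback ((ihom dL).map e) ((MonoidalClosed.pre (l ≫ l')).app Ebar) using 1
    · simp only [pullback.lift_fst, Category.comp_id]
    · simp [hpre]
  apply IsPullback.of_bot _ (by apply pullback.hom_ext <;> simp only [Category.assoc, pullback.lift_fst, pullback.lift_snd, pullback.lift_fst_assoc, pullback.lift_snd_assoc, Category.comp_id, Category.id_comp] <;> exact pullback.condition) bot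
  simp only [pullback.lift_snd, Category.comp_id]
  exact IsPullback.of_hasPullback ((ihom L).map e) ((MonoidalClosed.pre l').app Ebar)
end
end

section
/- Let C be a locally cartesian closed model category in which I is a good cylinder object for the terminal object and cofibrations are preserved by binary products (X × - preserves cofibrations). Fix a map E → B, an exponentiable object A, and a factorization [A,E] --q--> C₀ → [A,B] of the postcomposition map, where q is a trivial fibration. Let P^I_B(E) := [I,E] ×_{[I,B]} B be the fibred I-path object with endpoint evaluation ev_∂ : P^I_B(E) → E ×_B E. Then for any object D, map d : D → C₀, and pair of maps f₀, f₁ : D → [A,E] with q∘f₀ = q∘f₁ = d, there exists H : D → [A, P^I_B(E)] such that [A, ev_∂] ∘ H = (f₀, f₁) : D → [A, E ×_B E]. -/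
open CategoryTheory CategoryTheory.Limits CategoryTheory.MonoidalCategory
open CategoryTheory.CartesianClosed CartesianMonoidalCategory

universe v u
noncomputable section

variable {C : Type u} [Category.{v} C] [Limits.HasFiniteLimits C] [CartesianMonoidalCategory C]
variable [MonoidalClosed C]

/-- Evaluation of an `I`-indexed family at a point `t : 1 ⟶ I`. -/
def evAt {I X : C} (t : 𝟙_ C ⟶ I) : (I ⟹ X) ⟶ X :=
  lift (toUnit _ ≫ t) (𝟙 _) ≫ (ihom.ev I).app X

lemma evAt_nat {I X Y : C} (t : 𝟙_ C ⟶ I) (f : X ⟶ Y) :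
    (ihom I).map f ≫ evAt t = evAt t ≫ f := by
  have h : (I ◁ (ihom I).map f) ≫ (ihom.ev I).app Y = (ihom.ev I).app X ≫ f :=
    (ihom.ev I).naturality f
  rw [evAt, evAt, Category.assoc, ← h, ← Category.assoc, ← Category.assoc, comp_lift]
  have : lift (toUnit (I ⟹ X) ≫ t) (𝟙 (I ⟹ X)) ≫ (I ◁ (ihom I).map f)
      = lift (toUnit _ ≫ t) ((ihom I).map f) := by ext <;> simp
  rw [this]
  congr 2
  · rw [← Category.assoc, toUnit_unique ((ihom I).map f ≫ toUnit _) (toUnit _)]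
  · rw [Category.comp_id]

lemma const_evAt {I B : C} (t : 𝟙_ C ⟶ I) :
    MonoidalClosed.curry (CartesianMonoidalCategory.snd I B) ≫ evAt t = 𝟙 B := by
  rw [evAt, ← Category.assoc, comp_lift]
  have : lift (MonoidalClosed.curry (snd I B) ≫ toUnit (I ⟹ B) ≫ t)
        (MonoidalClosed.curry (snd I B) ≫ 𝟙 (I ⟹ B))
      = lift (toUnit B ≫ t) (𝟙 B) ≫ (I ◁ MonoidalClosed.curry (snd I B)) := by
    ext
    · simp only [lift_fst, whiskerLeft_fst, Category.assoc]
      rw [← Category.assoc,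
        toUnit_unique (MonoidalClosed.curry (snd I B) ≫ toUnit _) (toUnit _)]
    · simp
  rw [this, Category.assoc, ← MonoidalClosed.uncurry_eq, MonoidalClosed.uncurry_curry,
    lift_snd]

/-- The fibred `I`-path object `P^I_B(E) = [I,E] ×_{[I,B]} B` of `p : E ⟶ B`, where
`B ⟶ [I,B]` is the transpose of the projection (constant paths). -/
def pathObj (I : C) {E B : C} (p : E ⟶ B) : C :=
  pullback ((ihom I).map p) (MonoidalClosed.curry (CartesianMonoidalCategory.snd I B))

lemma pathObj_fst_evAt (I : C) {E B : C} (p : E ⟶ B) (t : 𝟙_ C ⟶ I) :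
    pullback.fst ((ihom I).map p) (MonoidalClosed.curry (CartesianMonoidalCategory.snd I B)) ≫
        evAt t ≫ p
      = pullback.snd _ _ := by
  rw [← evAt_nat, ← Category.assoc, pullback.condition, Category.assoc, const_evAt,
    Category.comp_id]

/-- The endpoint evaluation `ev_∂ : P^I_B(E) ⟶ E ×_B E`, with endpoints given by the two
points `inl ≫ c, inr ≫ c : 1 ⟶ I` of the cylinder `c : 1 ⊔ 1 ⟶ I`. -/
def evBdry [HasBinaryCoproducts C] {I E B : C} (c : (𝟙_ C) ⨿ (𝟙_ C) ⟶ I) (p : E ⟶ B) :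
    pathObj I p ⟶ pullback p p :=
  pullback.lift
    (pullback.fst ((ihom I).map p) (MonoidalClosed.curry (CartesianMonoidalCategory.snd I B)) ≫
      evAt (coprod.inl ≫ c))
    (pullback.fst ((ihom I).map p) (MonoidalClosed.curry (CartesianMonoidalCategory.snd I B)) ≫
      evAt (coprod.inr ≫ c))
    (by exact (Category.assoc _ _ _).trans ((pathObj_fst_evAt I p _).trans
      ((pathObj_fst_evAt I p _).symm.trans (Category.assoc _ _ _).symm)))


section Aux

variable {C : Type u} [Category.{v} C] [Limits.HasFiniteLimits C] [CartesianMonoidalCategory C]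
variable [MonoidalClosed C]

lemma curry_comp_evAt {I X E : C} (g : I ⊗ X ⟶ E) (t : 𝟙_ C ⟶ I) :
    MonoidalClosed.curry g ≫ evAt t = lift (toUnit X ≫ t) (𝟙 X) ≫ g := by
  rw [evAt, ← Category.assoc, comp_lift]
  have : lift (MonoidalClosed.curry g ≫ toUnit _ ≫ t) (MonoidalClosed.curry g ≫ 𝟙 _)
      = lift (toUnit X ≫ t) (𝟙 X) ≫ (I ◁ MonoidalClosed.curry g) := by
    ext
    · simp only [lift_fst, whiskerLeft_fst, Category.assoc]
      rw [← Category.assoc, toUnit_unique (MonoidalClosed.curry g ≫ toUnit _) (toUnit _)]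
    · simp
  rw [this, Category.assoc, ← MonoidalClosed.uncurry_eq, MonoidalClosed.uncurry_curry]

end Aux

/-- the homotopy-lifting lemma.  In a locally cartesian closed model
category in which `I` is a good cylinder object for the terminal object and cofibrations
are preserved by products, given a factorization `[A,E] --q--> C₀ --r--> [A,B]` of the
postcomposition map with `q` a trivial fibration, any two maps `f₀ f₁ : D ⟶ [A,E]`
agreeing in `C₀` are connected by a fibrewise homotopy `H : D ⟶ [A, P^I_B(E)]`. -/
theorem stmt17 [HasBinaryCoproducts C]
    (cof fib weq : MorphismProperty C)
    {I : C} (c : (𝟙_ C) ⨿ (𝟙_ C) ⟶ I) (hc : cof c)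
    (hw : weq (CartesianMonoidalCategory.toUnit I))
    (hprod : ∀ (X : C) {A B : C} (i : A ⟶ B), cof i → cof (X ◁ i))
    (hlift : ∀ {A B X Y : C} (i : A ⟶ B) (p : X ⟶ Y), cof i → fib p → weq p →
      ∀ (u : A ⟶ X) (v : B ⟶ Y), u ≫ p = i ≫ v → ∃ w : B ⟶ X, i ≫ w = u ∧ w ≫ p = v)
    {E B : C} (p : E ⟶ B) (A : C)
    {C₀ : C} (q : (A ⟹ E) ⟶ C₀) (r : C₀ ⟶ (A ⟹ B))
    (hfac : q ≫ r = (ihom A).map p) (hq1 : fib q) (hq2 : weq q)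
    (D : C) (d : D ⟶ C₀) (f₀ f₁ : D ⟶ (A ⟹ E)) (h₀ : f₀ ≫ q = d) (h₁ : f₁ ≫ q = d) :
    ∃ H : D ⟶ (A ⟹ pathObj I p),
      H ≫ (ihom A).map (evBdry c p) =
        MonoidalClosed.curry (pullback.lift
          (MonoidalClosed.uncurry f₀) (MonoidalClosed.uncurry f₁)
          (by rw [← MonoidalClosed.uncurry_natural_right,
                  ← MonoidalClosed.uncurry_natural_right, ← hfac,
                  ← Category.assoc, ← Category.assoc, h₀, h₁])) := by
  haveI : PreservesColimitsOfSize.{0,0} (tensorLeft D) :=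
    (ihom.adjunction D).leftAdjoint_preservesColimits
  set cc : ((tensorLeft D).obj (𝟙_ C)) ⨿ ((tensorLeft D).obj (𝟙_ C)) ⟶
      (tensorLeft D).obj ((𝟙_ C) ⨿ (𝟙_ C)) := coprodComparison (tensorLeft D) (𝟙_ C) (𝟙_ C)
    with hcc
  have hρ : CartesianMonoidalCategory.fst D (𝟙_ C) = (ρ_ D).hom := by
    rw [← Category.id_comp (CartesianMonoidalCategory.fst D (𝟙_ C)), ← Iso.hom_inv_id (ρ_ D),
      Category.assoc, rightUnitor_inv_fst, Category.comp_id]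
  set u : D ⊗ ((𝟙_ C) ⨿ (𝟙_ C)) ⟶ (A ⟹ E) :=
    inv cc ≫ coprod.desc ((ρ_ D).hom ≫ f₀) ((ρ_ D).hom ≫ f₁) with hu
  have hinv_inl : (tensorLeft D).map coprod.inl ≫ inv cc = coprod.inl := by
    rw [IsIso.comp_inv_eq, hcc, coprodComparison_inl]
  have hinv_inr : (tensorLeft D).map coprod.inr ≫ inv cc = coprod.inr := by
    rw [IsIso.comp_inv_eq, hcc, coprodComparison_inr]
  have hinl : (D ◁ coprod.inl) ≫ u = (ρ_ D).hom ≫ f₀ := by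
    rw [hu, show (D ◁ coprod.inl) = (tensorLeft D).map coprod.inl from rfl,
      ← Category.assoc, hinv_inl, coprod.inl_desc]
  have hinr : (D ◁ coprod.inr) ≫ u = (ρ_ D).hom ≫ f₁ := by
    rw [hu, show (D ◁ coprod.inr) = (tensorLeft D).map coprod.inr from rfl,
      ← Category.assoc, hinv_inr, coprod.inr_desc]
  have hinl' : ∀ {Z : C} (g : (A ⟹ E) ⟶ Z),
      (D ◁ coprod.inl) ≫ u ≫ g = (ρ_ D).hom ≫ f₀ ≫ g := by
    intro Z g; rw [← Category.assoc, hinl, Category.assoc]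
  have hinr' : ∀ {Z : C} (g : (A ⟹ E) ⟶ Z),
      (D ◁ coprod.inr) ≫ u ≫ g = (ρ_ D).hom ≫ f₁ ≫ g := by
    intro Z g; rw [← Category.assoc, hinr, Category.assoc]
  have hsq : u ≫ q = (D ◁ c) ≫ (CartesianMonoidalCategory.fst D I ≫ d) := by
    rw [← cancel_epi cc]
    ext
    · rw [hcc, coprodComparison_inl_assoc, coprodComparison_inl_assoc]
      show (D ◁ coprod.inl) ≫ u ≫ q = (D ◁ coprod.inl) ≫ (D ◁ c) ≫ _
      rw [hinl', h₀, whiskerLeft_fst_assoc, whiskerLeft_fst_assoc, hρ]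
    · rw [hcc, coprodComparison_inr_assoc, coprodComparison_inr_assoc]
      show (D ◁ coprod.inr) ≫ u ≫ q = (D ◁ coprod.inr) ≫ (D ◁ c) ≫ _
      rw [hinr', h₁, whiskerLeft_fst_assoc, whiskerLeft_fst_assoc, hρ]
  obtain ⟨w, hw1, hw2⟩ := hlift (D ◁ c) q (hprod D c hc) hq1 hq2 u
    (CartesianMonoidalCategory.fst D I ≫ d) hsq
  -- `f` is recovered from `w` along the endpoint `j`
  have hgen : ∀ (j : (𝟙_ C) ⟶ (𝟙_ C) ⨿ (𝟙_ C)) (f : D ⟶ A ⟹ E),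
      (D ◁ j) ≫ u = (ρ_ D).hom ≫ f → f = lift (𝟙 D) (toUnit D ≫ j ≫ c) ≫ w := by
    intro j f hj
    have hj0 : lift (𝟙 D) (toUnit D ≫ j) = (ρ_ D).inv ≫ (D ◁ j) := by
      ext
      · simp
      · simp
    have h1 : lift (𝟙 D) (toUnit D ≫ j) ≫ (D ◁ c) = lift (𝟙 D) (toUnit D ≫ j ≫ c) := by
      ext
      · simp
      · simp only [Category.assoc, whiskerLeft_snd, lift_snd, lift_snd_assoc]
    rw [← h1, Category.assoc, hw1, hj0, Category.assoc, hj, Iso.inv_hom_id_assoc]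
  have hf₀ := hgen coprod.inl f₀ hinl
  have hf₁ := hgen coprod.inr f₁ hinr
  -- build the homotopy
  set swap : I ⊗ (A ⊗ D) ⟶ A ⊗ (D ⊗ I) :=
    lift (CartesianMonoidalCategory.snd _ _ ≫ CartesianMonoidalCategory.fst _ _)
      (lift (CartesianMonoidalCategory.snd _ _ ≫ CartesianMonoidalCategory.snd _ _)
        (CartesianMonoidalCategory.fst _ _)) with hswap
  set K₁ : A ⊗ D ⟶ (I ⟹ E) := MonoidalClosed.curry (swap ≫ MonoidalClosed.uncurry w)
    with hK₁
  set K₂ : A ⊗ D ⟶ B := MonoidalClosed.uncurry (d ≫ r) with hK₂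
  have hcond : K₁ ≫ (ihom I).map p =
      K₂ ≫ MonoidalClosed.curry (CartesianMonoidalCategory.snd I B) := by
    apply MonoidalClosed.uncurry_injective
    rw [MonoidalClosed.uncurry_natural_right, hK₁, MonoidalClosed.uncurry_curry,
      MonoidalClosed.uncurry_natural_left, MonoidalClosed.uncurry_curry]
    have hwp : MonoidalClosed.uncurry w ≫ p = (A ◁ CartesianMonoidalCategory.fst D I) ≫ K₂ := by
      rw [← MonoidalClosed.uncurry_natural_right, ← hfac, ← Category.assoc, hw2,
        Category.assoc, hK₂, ← MonoidalClosed.uncurry_natural_left]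
    rw [Category.assoc, hwp, ← Category.assoc, hswap]
    have : (lift (CartesianMonoidalCategory.snd I (A ⊗ D) ≫ CartesianMonoidalCategory.fst A D)
        (lift (CartesianMonoidalCategory.snd I (A ⊗ D) ≫ CartesianMonoidalCategory.snd A D)
          (CartesianMonoidalCategory.fst I (A ⊗ D)))) ≫ (A ◁ CartesianMonoidalCategory.fst D I) =
        CartesianMonoidalCategory.snd I (A ⊗ D) := by
      ext
      · simp
      · simp
    rw [this, whiskerLeft_snd]
  refine ⟨MonoidalClosed.curry (pullback.lift K₁ K₂ hcond), ?_⟩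
  erw [← MonoidalClosed.curry_natural_right]
  congr 1
  have hleg : ∀ (t : 𝟙_ C ⟶ I),
      pullback.lift K₁ K₂ hcond ≫
        pullback.fst ((ihom I).map p)
          (MonoidalClosed.curry (CartesianMonoidalCategory.snd I B)) ≫ evAt t =
      (A ◁ lift (𝟙 D) (toUnit D ≫ t)) ≫ MonoidalClosed.uncurry w := by
    intro t
    rw [← Category.assoc, pullback.lift_fst, hK₁, curry_comp_evAt, ← Category.assoc, hswap]
    congr 1
    apply CartesianMonoidalCategory.hom_ext
    · simp
    · apply CartesianMonoidalCategory.hom_ext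
      · simp
      · simp only [Category.assoc, whiskerLeft_snd, lift_snd, lift_snd_assoc, lift_fst_assoc,
          comp_lift, Category.comp_id, Category.id_comp]
        rw [show CartesianMonoidalCategory.snd A D ≫ toUnit D ≫ t = toUnit (A ⊗ D) ≫ t by
          rw [← Category.assoc, toUnit_unique (CartesianMonoidalCategory.snd A D ≫ toUnit D)
            (toUnit (A ⊗ D))]]
        exact lift_fst _ _
  apply pullback.hom_ext
  · refine (Category.assoc _ _ _).trans ?_
    rw [evBdry, pullback.lift_fst, pullback.lift_fst]
    refine (hleg _).trans ?_
    rw [hf₀,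
      MonoidalClosed.uncurry_natural_left]
  · refine (Category.assoc _ _ _).trans ?_
    rw [evBdry, pullback.lift_snd, pullback.lift_snd]
    refine (hleg _).trans ?_
    rw [hf₁,
      MonoidalClosed.uncurry_natural_left]
end
end
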